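/- arXiv:2104.10905 — 2 statements merged into one kernel-verified Lean document; each statement's English description precedes it below -/
import Mathlib

section
/- With threshold T* = √(1/q² + 2ρc) − 1/q and cycle length T = T* + X where X is exponential with rate q > 0, the cost (Var(T) + 2ρc)/(2E[T]) + E[T]/2 equals √(1/q² + 2ρc), the minimum possible value of (v + 2ρc)/(2m) + m/2 over m > 0 and v ≥ 1/q². -/
open MeasureTheory ProbabilityTheory Real Set
open scoped ENNReal NNReal

lemma exp_moment (q : ℝ) (hq : 0 < q) (n : ℕ) :
    Integrable (fun x : ℝ => x ^ n) (expMeasure q) ∧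
      ∫ x, x ^ n ∂(expMeasure q) = (n.factorial : ℝ) / q ^ n := by
  have hpdfm : Measurable (gammaPDFReal 1 q) := measurable_gammaPDFReal 1 q
  have hexp : expMeasure q = volume.withDensity (gammaPDF 1 q) := rfl
  have hpdf : ∀ x : ℝ, 0 ≤ x → gammaPDFReal 1 q x = q * Real.exp (-(q * x)) := by
    intro x hx
    simp only [gammaPDFReal, if_pos hx, Real.Gamma_one, Real.rpow_one, sub_self,
      Real.rpow_zero]
    ring
  set f : ℝ → ℝ := (Ici (0:ℝ)).indicator (fun x => x ^ n * (q * Real.exp (-(q * x)))) with hf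
  have hfun : (fun x : ℝ => x ^ n * (gammaPDF 1 q x).toReal) = f := by
    funext x
    by_cases hx : 0 ≤ x
    · rw [hf, indicator_of_mem (mem_Ici.2 hx),
        show gammaPDF 1 q x = ENNReal.ofReal (gammaPDFReal 1 q x) from rfl,
        hpdf x hx, ENNReal.toReal_ofReal (by positivity)]
    · rw [hf, indicator_of_notMem (by simpa using hx), gammaPDF_of_neg (lt_of_not_ge hx)]
      simp
  have hioi : IntegrableOn (fun x : ℝ => x ^ n * (q * Real.exp (-(q * x)))) (Ioi 0) := by
    have h := integrableOn_rpow_mul_exp_neg_mul_rpow (p := 1) (s := (n : ℝ)) (b := q)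
      (lt_of_lt_of_le (by norm_num) (Nat.cast_nonneg n)) zero_lt_one hq
    have h2 : IntegrableOn (fun x : ℝ => q * (x ^ (n:ℝ) * Real.exp (-q * x ^ (1:ℝ)))) (Ioi 0) :=
      h.const_mul q
    exact h2.congr_fun (fun x _ => by beta_reduce; rw [Real.rpow_natCast, Real.rpow_one]; ring)
      measurableSet_Ioi
  have hintf : Integrable f volume := by
    rw [hf, integrable_indicator_iff measurableSet_Ici,
      integrableOn_Ici_iff_integrableOn_Ioi]
    exact hioi
  have hInteg : Integrable (fun x : ℝ => x ^ n) (expMeasure q) := by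
    rw [hexp]
    exact (integrable_withDensity_iff (f := gammaPDF 1 q) hpdfm.ennreal_ofReal
      (ae_of_all _ fun x => ENNReal.ofReal_lt_top)).2 (hfun ▸ hintf)
  refine ⟨hInteg, ?_⟩
  have hInt : ∫ x, x ^ n ∂(expMeasure q) = ∫ x, f x := by
    rw [hexp,
      show (gammaPDF 1 q) = (fun x => ((gammaPDFReal 1 q x).toNNReal : ℝ≥0∞)) from rfl,
      integral_withDensity_eq_integral_smul (hpdfm.real_toNNReal) _]
    refine integral_congr_ae (Filter.Eventually.of_forall fun x => ?_)
    show (gammaPDFReal 1 q x).toNNReal • x ^ n = f x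
    rw [NNReal.smul_def, smul_eq_mul,
      Real.coe_toNNReal _ (gammaPDFReal_nonneg zero_lt_one hq x)]
    by_cases hx : 0 ≤ x
    · rw [hpdf x hx, hf, indicator_of_mem (mem_Ici.2 hx)]; ring
    · rw [hf, indicator_of_notMem (by simpa using hx)]
      simp [gammaPDFReal, if_neg hx]
  rw [hInt, hf, integral_indicator measurableSet_Ici, integral_Ici_eq_integral_Ioi]
  have key := integral_rpow_mul_exp_neg_mul_Ioi (a := (n : ℝ) + 1) (by positivity) hq
  have h2 : ∫ x in Ioi (0:ℝ), x ^ n * (q * Real.exp (-(q * x)))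
      = q * ∫ t in Ioi (0:ℝ), t ^ ((n : ℝ) + 1 - 1) * Real.exp (-(q * t)) := by
    rw [← integral_const_mul]
    refine setIntegral_congr_fun measurableSet_Ioi (fun x _ => ?_)
    rw [add_sub_cancel_right, Real.rpow_natCast]
    ring
  rw [h2, key, Real.Gamma_nat_eq_factorial,
    show ((n : ℝ) + 1) = ((n + 1 : ℕ) : ℝ) by push_cast; ring, Real.rpow_natCast]
  field_simp
  rw [pow_succ]
  ring_nf
  field_simp
  rw [← mul_pow, mul_one_div_cancel hq.ne', one_pow]

theorem stmt3 {Ω : Type*} [MeasureSpace Ω] [IsProbabilityMeasure (ℙ : Measure Ω)]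
    (q ρc : ℝ) (hq : 0 < q) (hρc : 0 ≤ ρc)
    (X : Ω → ℝ) (hXm : Measurable X) (hX : Measure.map X ℙ = expMeasure q)
    (T : Ω → ℝ) (hT : T = fun ω => (Real.sqrt (1 / q ^ 2 + 2 * ρc) - 1 / q) + X ω)
    (F : ℝ → ℝ → ℝ) (hF : ∀ m v, F m v = (v + 2 * ρc) / (2 * m) + m / 2) :
    (variance T ℙ + 2 * ρc) / (2 * ∫ ω, T ω ∂ℙ) + (∫ ω, T ω ∂ℙ) / 2
        = Real.sqrt (1 / q ^ 2 + 2 * ρc) ∧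
      IsLeast {z : ℝ | ∃ m v, 0 < m ∧ 1 / q ^ 2 ≤ v ∧ z = F m v}
        (Real.sqrt (1 / q ^ 2 + 2 * ρc)) := by
  have hg1 : AEStronglyMeasurable (fun x : ℝ => x ^ 1) (Measure.map X ℙ) :=
    (measurable_id.pow_const 1).aestronglyMeasurable
  have hg2 : AEStronglyMeasurable (fun x : ℝ => x ^ 2) (Measure.map X ℙ) :=
    (measurable_id.pow_const 2).aestronglyMeasurable
  obtain ⟨h1i, h1v⟩ := exp_moment q hq 1
  obtain ⟨h2i, h2v⟩ := exp_moment q hq 2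
  set s : ℝ := 1 / q ^ 2 + 2 * ρc with hs
  have hs0 : 0 < s := by positivity
  have hsq : Real.sqrt s * Real.sqrt s = s := Real.mul_self_sqrt hs0.le
  have hsp : 0 < Real.sqrt s := Real.sqrt_pos.2 hs0
  set c : ℝ := Real.sqrt s - 1 / q with hc
  -- integrability of X and X^2
  have hXint : Integrable X ℙ := by
    have h := (integrable_map_measure (f := X) (g := fun x : ℝ => x ^ 1)
      hg1 hXm.aemeasurable).1
      (hX ▸ h1i)
    simpa [Function.comp_def] using h
  have hX2int : Integrable (fun ω => X ω ^ 2) ℙ := by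
    have h := (integrable_map_measure (f := X) (g := fun x : ℝ => x ^ 2)
      hg2 hXm.aemeasurable).1
      (hX ▸ h2i)
    simpa [Function.comp_def] using h
  have hEX : ∫ ω, X ω ∂ℙ = 1 / q := by
    have h := integral_map (φ := X) (f := fun x : ℝ => x ^ 1) hXm.aemeasurable hg1
    rw [hX, h1v] at h
    simpa using h.symm
  have hEX2 : ∫ ω, X ω ^ 2 ∂ℙ = 2 / q ^ 2 := by
    have h := integral_map (φ := X) (f := fun x : ℝ => x ^ 2) hXm.aemeasurable hg2
    rw [hX, h2v] at h
    norm_num at h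
    simpa using h.symm
  -- expectation of T
  have hET : ∫ ω, T ω ∂ℙ = Real.sqrt s := by
    rw [hT, integral_add (integrable_const c) hXint, integral_const, hEX]
    simp [hc]
  -- Memℒp
  have hX2ℒ : MemLp X 2 ℙ :=
    (memLp_two_iff_integrable_sq hXm.aestronglyMeasurable).2 hX2int
  have hTℒ : MemLp T 2 ℙ := by
    rw [hT]
    exact (memLp_const c).add hX2ℒ
  -- variance of T
  have hVar : variance T ℙ = 1 / q ^ 2 := by
    rw [variance_eq_sub hTℒ, hET]
    have hTsq : T ^ 2 = fun ω => c ^ 2 + (2 * c) * X ω + X ω ^ 2 := by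
      funext ω; rw [Pi.pow_apply, hT]; ring
    have hI : ∫ ω, (c ^ 2 + (2 * c) * X ω + X ω ^ 2) ∂ℙ
        = c ^ 2 + (2 * c) * (1 / q) + 2 / q ^ 2 := by
      have i2 : Integrable (fun ω => 2 * c * X ω) ℙ := hXint.const_mul _
      have i1 : Integrable (fun ω => c ^ 2 + 2 * c * X ω) ℙ := (integrable_const _).add i2
      rw [integral_add i1 hX2int, integral_add (integrable_const _) i2,
        integral_const, integral_const_mul, hEX, hEX2]
      simp [measure_univ]
    simp only [hTsq]
    rw [hI, hc]
    ring
  have hkey : 1 / q ^ 2 + 2 * ρc = Real.sqrt s * Real.sqrt s := by rw [hsq, hs]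
  constructor
  · rw [hET, hVar, hkey,
      div_add_div _ _ (by positivity) (two_ne_zero), div_eq_iff (by positivity)]
    ring
  · constructor
    · refine ⟨Real.sqrt s, 1 / q ^ 2, hsp, le_refl _, ?_⟩
      rw [hF, hkey,
        div_add_div _ _ (by positivity) (two_ne_zero), eq_div_iff (by positivity)]
      ring
    · rintro z ⟨m, v, hm, hv, rfl⟩
      rw [hF]
      have heq : (v + 2 * ρc) / (2 * m) + m / 2 = (v + 2 * ρc + m ^ 2) / (2 * m) := by
        field_simp
      rw [heq, le_div_iff₀ (by positivity)]
      nlinarith [sq_nonneg (m - Real.sqrt s), hsq, hv, hs]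
end

section
/- Let T be a nonnegative random variable with mean μ̂ = E[T], such that P(|T − μ̂| > y) ≥ e^{−2qy} for 0 ≤ y ≤ μ̂ and P(|T − μ̂| > y) ≥ e^{−q(μ̂ + y)} for y > μ̂, where q > 0. Then Var(T) ≥ 1/(2q²). -/
open MeasureTheory ProbabilityTheory

theorem stmt6 {Ω : Type*} [MeasureSpace Ω] [IsProbabilityMeasure (ℙ : Measure Ω)]
    (q : ℝ) (hq : 0 < q) (T : Ω → ℝ) (hT0 : ∀ ω, 0 ≤ T ω) (hT2 : MemLp T 2 ℙ)
    (μ : ℝ) (hμ : μ = ∫ ω, T ω ∂ℙ)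
    (h1 : ∀ y : ℝ, 0 ≤ y → y ≤ μ →
      Real.exp (-(2 * q * y)) ≤ (ℙ {ω | |T ω - μ| > y}).toReal)
    (h2 : ∀ y : ℝ, μ < y →
      Real.exp (-(q * (μ + y))) ≤ (ℙ {ω | |T ω - μ| > y}).toReal) :
    1 / (2 * q ^ 2) ≤ variance T ℙ := by
  have hq' : q ≠ 0 := ne_of_gt hq
  -- combined tail bound
  have hkey : ∀ y : ℝ, 0 ≤ y →
      Real.exp (-(2 * q * y)) ≤ (ℙ {ω | |T ω - μ| > y}).toReal := by
    intro y hy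
    by_cases hyl : y ≤ μ
    · exact h1 y hy hyl
    · push_neg at hyl
      refine le_trans ?_ (h2 y hyl)
      apply Real.exp_le_exp.2
      nlinarith
  set f : Ω → ℝ := fun ω => (T ω - μ) ^ 2 with hf
  have hfm : MemLp (fun ω => T ω - μ) 2 ℙ := hT2.sub (memLp_const μ)
  have hf_int : Integrable f ℙ := hfm.integrable_sq
  have hf_nn : 0 ≤ᵐ[ℙ] f := Filter.Eventually.of_forall fun ω => sq_nonneg _
  -- variance equals ∫ f
  have hvar : variance T ℙ = ∫ ω, f ω ∂ℙ := by
    rw [variance_eq_integral hT2.aemeasurable]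
    congr 1
    funext ω
    simp [f, hμ]
  -- layer cake
  have hlc : ∫ ω, f ω ∂ℙ = ∫ t in Set.Ioi (0:ℝ),
      ENNReal.toReal (ℙ {a : Ω | t < f a}) :=
    hf_int.integral_eq_integral_meas_lt hf_nn
  -- integrability of the tail probability function on (0, ∞)
  have hanti : Antitone fun t : ℝ => ℙ {a : Ω | t < f a} :=
    fun s t hst => measure_mono fun a ha => lt_of_le_of_lt hst ha
  have hmeas : Measurable fun t : ℝ => ℙ {a : Ω | t < f a} := hanti.measurable
  have hlint : (∫⁻ t in Set.Ioi (0:ℝ), ℙ {a : Ω | t < f a}) ≠ ⊤ := by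
    rw [← lintegral_eq_lintegral_meas_lt ℙ hf_nn hf_int.aemeasurable]
    exact hf_int.lintegral_lt_top.ne
  have htail_int : IntegrableOn (fun t : ℝ =>
      ENNReal.toReal (ℙ {a : Ω | t < f a})) (Set.Ioi (0:ℝ)) := by
    exact integrable_toReal_of_lintegral_ne_top hmeas.aemeasurable hlint
  -- the exponential lower bound and its integral
  set g : ℝ → ℝ := fun t => -(Real.exp (-(2 * q * Real.sqrt t)) *
      (Real.sqrt t / q + 1 / (2 * q ^ 2))) with hg
  have hgderiv : ∀ t ∈ Set.Ioi (0:ℝ),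
      HasDerivAt g (Real.exp (-(2 * q * Real.sqrt t))) t := by
    intro t ht
    have ht0 : (0:ℝ) < t := ht
    have hst : (0:ℝ) < Real.sqrt t := Real.sqrt_pos.2 ht0
    have hs : HasDerivAt Real.sqrt (1 / (2 * Real.sqrt t)) t :=
      Real.hasDerivAt_sqrt (ne_of_gt ht0)
    have hsd : HasDerivAt (fun u => -(2 * q * Real.sqrt u))
        (-(2 * q * (1 / (2 * Real.sqrt t)))) t := ((hs.const_mul (2 * q)).neg)
    have hexp : HasDerivAt (fun u => Real.exp (-(2 * q * Real.sqrt u)))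
        (Real.exp (-(2 * q * Real.sqrt t)) * (-(2 * q * (1 / (2 * Real.sqrt t))))) t :=
      (Real.hasDerivAt_exp _).comp t hsd
    have hlin : HasDerivAt (fun u => Real.sqrt u / q + 1 / (2 * q ^ 2))
        (1 / (2 * Real.sqrt t) / q) t := (hs.div_const q).add_const _
    have := (hexp.mul hlin).neg
    convert this using 1
    · rfl
    · rfl
    · rfl
    have hstne : Real.sqrt t ≠ 0 := ne_of_gt hst
    field_simp
    ring
  have hgcont : ContinuousWithinAt g (Set.Ici (0:ℝ)) 0 := by
    have : Continuous g := by
      apply Continuous.neg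
      exact (Real.continuous_exp.comp
        ((continuous_const.mul Real.continuous_sqrt).neg)).mul
        ((Real.continuous_sqrt.div_const q).add continuous_const)
    exact this.continuousWithinAt
  have hgtend : Filter.Tendsto g Filter.atTop (nhds 0) := by
    have hsqrt : Filter.Tendsto Real.sqrt Filter.atTop Filter.atTop := by
      refine (tendsto_rpow_atTop (y := (1:ℝ)/2) (by norm_num)).congr' ?_
      filter_upwards [Filter.eventually_ge_atTop (0:ℝ)] with x hx
      exact (Real.sqrt_eq_rpow x).symm
    have huatTop : Filter.Tendsto (fun t : ℝ => 2 * q * Real.sqrt t)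
        Filter.atTop Filter.atTop := by
      apply Filter.Tendsto.const_mul_atTop (by positivity) hsqrt
    have hG : Filter.Tendsto (fun u : ℝ =>
        -(Real.exp (-u) * (u / (2 * q ^ 2) + 1 / (2 * q ^ 2))))
        Filter.atTop (nhds 0) := by
      have h1' : Filter.Tendsto (fun u : ℝ => Real.exp (-u) * (u / (2 * q ^ 2)))
          Filter.atTop (nhds 0) := by
        have := (Real.tendsto_pow_mul_exp_neg_atTop_nhds_zero 1).div_const (2 * q ^ 2)
        simp only [pow_one, zero_div] at this
        refine this.congr fun u => ?_
        ring
      have h2' : Filter.Tendsto (fun u : ℝ => Real.exp (-u) * (1 / (2 * q ^ 2)))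
          Filter.atTop (nhds 0) := by
        have := Real.tendsto_exp_neg_atTop_nhds_zero.mul_const (1 / (2 * q ^ 2))
        simpa using this
      have := (h1'.add h2').neg
      simp only [add_zero, neg_zero] at this
      refine this.congr fun u => ?_
      ring
    have : Filter.Tendsto (fun t : ℝ =>
        -(Real.exp (-(2 * q * Real.sqrt t)) *
          ((2 * q * Real.sqrt t) / (2 * q ^ 2) + 1 / (2 * q ^ 2))))
        Filter.atTop (nhds 0) := hG.comp huatTop
    refine this.congr fun t => ?_
    simp only [hg]
    congr 2
    field_simp
  have hgpos : ∀ t ∈ Set.Ioi (0:ℝ), 0 ≤ Real.exp (-(2 * q * Real.sqrt t)) :=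
    fun t _ => (Real.exp_pos _).le
  have hexp_int : IntegrableOn (fun t : ℝ => Real.exp (-(2 * q * Real.sqrt t)))
      (Set.Ioi (0:ℝ)) :=
    integrableOn_Ioi_deriv_of_nonneg hgcont hgderiv hgpos hgtend
  have hexp_val : ∫ t in Set.Ioi (0:ℝ), Real.exp (-(2 * q * Real.sqrt t))
      = 1 / (2 * q ^ 2) := by
    rw [integral_Ioi_of_hasDerivAt_of_nonneg hgcont hgderiv hgpos hgtend]
    simp [hg, Real.sqrt_zero]
  -- pointwise comparison on (0, ∞)
  have hcomp : ∀ t ∈ Set.Ioi (0:ℝ), Real.exp (-(2 * q * Real.sqrt t))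
      ≤ ENNReal.toReal (ℙ {a : Ω | t < f a}) := by
    intro t ht
    have ht0 : (0:ℝ) < t := ht
    have hset : {ω : Ω | |T ω - μ| > Real.sqrt t} = {a : Ω | t < f a} := by
      ext ω
      simp only [Set.mem_setOf_eq, gt_iff_lt, hf]
      rw [← Real.sqrt_lt_sqrt_iff ht0.le, Real.sqrt_sq_eq_abs]
    have := hkey (Real.sqrt t) (Real.sqrt_nonneg t)
    rwa [hset] at this
  calc 1 / (2 * q ^ 2)
      = ∫ t in Set.Ioi (0:ℝ), Real.exp (-(2 * q * Real.sqrt t)) := hexp_val.symm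
    _ ≤ ∫ t in Set.Ioi (0:ℝ), ENNReal.toReal (ℙ {a : Ω | t < f a}) := by
        refine setIntegral_mono_on hexp_int htail_int measurableSet_Ioi hcomp
    _ = ∫ ω, f ω ∂ℙ := hlc.symm
    _ = variance T ℙ := hvar.symm
end
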